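/- arXiv:2102.00972 — 5 statements merged into one kernel-verified Lean document; each statement's English description precedes it below -/
import Mathlib

section
/- Let α, β be real numbers with α² > 4 and β > 0. Then the quartic polynomial q_{α,β} has exactly 2 roots (counted with multiplicity) in the open unit disk U_1(0) = {z ∈ ℂ : |z| < 1}. -/
open Polynomial

/-- The quartic polynomial `q_{α,β}(w) = w⁴ + α w³ + (β − 4) w² − α w + 3` over ℂ. -/
noncomputable def q (α β : ℝ) : Polynomial ℂ :=
  X ^ 4 + C (α : ℂ) * X ^ 3 + C (((β - 4 : ℝ)) : ℂ) * X ^ 2 - C (α : ℂ) * X + C 3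

/- ### Auxiliary lemmas -/

private lemma real_quad_inside (a b x : ℝ) (hb0 : 0 < b) (hb1 : b < 1)
    (ha1 : -(1+b) < a) (ha2 : a < 1 + b) (hre : x ^ 2 + a * x + b = 0) :
    x ^ 2 < 1 := by
  rcases le_or_gt 0 x with hx0 | hx0
  · rcases le_or_gt 1 x with hx1 | hx1
    · exfalso
      nlinarith [mul_pos (lt_of_lt_of_le one_pos hx1) (by linarith : (0:ℝ) < a + 1 + b),
        mul_nonneg (by linarith : (0:ℝ) ≤ x - 1) (by linarith : (0:ℝ) ≤ x - b)]
    · nlinarith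
  · rcases le_or_gt x (-1) with hx1 | hx1
    · exfalso
      nlinarith [mul_pos (by linarith : (0:ℝ) < -x) (by linarith : (0:ℝ) < 1 + b - a),
        mul_nonneg (by linarith : (0:ℝ) ≤ -x - 1) (by linarith : (0:ℝ) ≤ -x - b)]
    · nlinarith

private lemma real_quad_outside (c d x : ℝ) (hd : 3 < d)
    (hc1 : -(1+d) < c) (hc2 : c < 1 + d) (hre : x ^ 2 + c * x + d = 0) :
    1 ≤ x ^ 2 := by
  by_contra hcon
  push_neg at hcon
  have hx1 : -1 < x := by nlinarith
  have hx2 : x < 1 := by nlinarith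
  rcases le_or_gt 0 x with hx0 | hx0
  · nlinarith [mul_pos (by linarith : (0:ℝ) < 1 - x) (by linarith : (0:ℝ) < d - x),
      mul_nonneg hx0 (by linarith : (0:ℝ) ≤ c + 1 + d)]
  · nlinarith [mul_pos (by linarith : (0:ℝ) < x + 1) (by linarith : (0:ℝ) < x + d),
      mul_pos (by linarith : (0:ℝ) < -x) (by linarith : (0:ℝ) < 1 + d - c)]

private lemma complex_quad_parts (a b : ℝ) (z : ℂ) (hz : z ^ 2 + (a:ℂ) * z + (b:ℂ) = 0) :
    z.re ^ 2 - z.im ^ 2 + a * z.re + b = 0 ∧ 2 * z.re * z.im + a * z.im = 0 := by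
  have h1 := congrArg Complex.re hz
  have h2 := congrArg Complex.im hz
  simp [pow_two, Complex.add_re, Complex.add_im, Complex.mul_re, Complex.mul_im] at h1 h2
  constructor <;> nlinarith [h1, h2]

private lemma abs_lt_one_iff (z : ℂ) : ‖z‖ < 1 ↔ z.re ^ 2 + z.im ^ 2 < 1 := by
  rw [Complex.norm_def, Complex.normSq_apply,
    show z.re * z.re + z.im * z.im = z.re ^ 2 + z.im ^ 2 by ring]
  rw [show (1:ℝ) = Real.sqrt 1 by simp]
  rw [Real.sqrt_lt_sqrt_iff (by positivity)]
  simp [Real.sqrt_one]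

private lemma quad_root_inside (a b : ℝ) (hb0 : 0 < b) (hb1 : b < 1) (ha : |a| < 1 + b)
    (z : ℂ) (hz : z ^ 2 + (a:ℂ) * z + (b:ℂ) = 0) : ‖z‖ < 1 := by
  obtain ⟨ha1, ha2⟩ := abs_lt.1 ha
  obtain ⟨hre, him⟩ := complex_quad_parts a b z hz
  rw [abs_lt_one_iff]
  rcases eq_or_ne z.im 0 with h0 | h0
  · rw [h0] at hre ⊢
    have := real_quad_inside a b z.re hb0 hb1 ha1 ha2 (by linarith)
    nlinarith
  · have hax : a = -2 * z.re := by
      have h : z.im * (2 * z.re + a) = 0 := by linarith [him]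
      rcases mul_eq_zero.1 h with h | h
      · exact absurd h h0
      · linarith
    nlinarith

private lemma quad_root_outside (c d : ℝ) (hd : 3 < d) (hc : |c| < 1 + d)
    (z : ℂ) (hz : z ^ 2 + (c:ℂ) * z + (d:ℂ) = 0) : ¬ ‖z‖ < 1 := by
  obtain ⟨hc1, hc2⟩ := abs_lt.1 hc
  obtain ⟨hre, him⟩ := complex_quad_parts c d z hz
  rw [abs_lt_one_iff]
  push_neg
  rcases eq_or_ne z.im 0 with h0 | h0
  · rw [h0] at hre ⊢
    have := real_quad_outside c d z.re hd hc1 hc2 (by linarith)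
    nlinarith
  · have hax : c = -2 * z.re := by
      have h : z.im * (2 * z.re + c) = 0 := by linarith [him]
      rcases mul_eq_zero.1 h with h | h
      · exact absurd h h0
      · linarith
    nlinarith

private lemma exists_rho (A : ℝ) (hA : 2 < A) :
    ∃ ρ : ℝ, 0 < ρ ∧ ρ < 1 ∧ ρ ^ 2 + A * ρ = 3 := by
  have hsq : Real.sqrt (A ^ 2 + 12) ^ 2 = A ^ 2 + 12 := Real.sq_sqrt (by positivity)
  refine ⟨(-A + Real.sqrt (A ^ 2 + 12)) / 2, ?_, ?_, ?_⟩
  · nlinarith [Real.sqrt_nonneg (A ^ 2 + 12)]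
  · nlinarith [Real.sqrt_nonneg (A ^ 2 + 12)]
  · nlinarith [Real.sqrt_nonneg (A ^ 2 + 12)]

private lemma exists_b (α β : ℝ) (hα : 4 < α ^ 2) (hβ : 0 < β) :
    ∃ b : ℝ, 0 < b ∧ b < 1 ∧ |α| * b + b ^ 2 < 3 ∧
      (b+1)*(b+3)/b - α^2 * (b*(b+1)*(b+3)) / ((b^2-3)^2) = β := by
  have hA : 2 < |α| := by
    have := abs_nonneg α
    nlinarith [sq_abs α]
  have hαsq : |α| ^ 2 = α ^ 2 := sq_abs α
  obtain ⟨ρ, hρpos, hρ1, hρeq⟩ := exists_rho |α| hA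
  set G : ℝ → ℝ := fun b => (b+1)*(b+3)/b - α^2 * (b*(b+1)*(b+3)) / ((b^2-3)^2) with hGdef
  set b₀ : ℝ := min (ρ/2) (3/(β + 2*α^2)) with hb₀def
  have hb₀pos : 0 < b₀ := lt_min (by linarith) (by positivity)
  have hb₀ρ : b₀ < ρ := lt_of_le_of_lt (min_le_left _ _) (by linarith)
  have hb₀1 : b₀ < 1 := by linarith
  have hcont : ContinuousOn G (Set.Icc b₀ ρ) := by
    apply ContinuousOn.sub
    · apply ContinuousOn.div (by fun_prop) (by fun_prop)
      intro x hx
      have := hx.1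
      intro h; rw [h] at this; linarith
    · apply ContinuousOn.div (by fun_prop) (by fun_prop)
      intro x hx
      have h1 : x ≤ ρ := hx.2
      have h2 : b₀ ≤ x := hx.1
      have h3 : x ^ 2 - 3 < 0 := by nlinarith
      exact pow_ne_zero 2 (ne_of_lt h3)
  have hGρ : G ρ = 0 := by
    have h1 : (ρ ^ 2 - 3) ^ 2 = α ^ 2 * ρ ^ 2 := by nlinarith
    show (ρ+1)*(ρ+3)/ρ - α^2 * (ρ*(ρ+1)*(ρ+3)) / ((ρ^2-3)^2) = 0
    rw [h1]
    have hρne : ρ ≠ 0 := ne_of_gt hρpos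
    have hαne : α ^ 2 ≠ 0 := by positivity
    have hα0 : α ≠ 0 := by rintro rfl; simp at hαne
    field_simp
    ring
  have hGb₀ : β ≤ G b₀ := by
    have e0 : (b₀+1)*(b₀+3)/b₀ = b₀ + 4 + 3/b₀ := by field_simp; ring
    have e1 : β + 2*α^2 ≤ 3/b₀ := by
      rw [le_div_iff₀ hb₀pos]
      calc (β + 2*α^2) * b₀ ≤ (β + 2*α^2) * (3/(β + 2*α^2)) := by
            apply mul_le_mul_of_nonneg_left (min_le_right _ _) (by positivity)
        _ = 3 := by field_simp
    have hprod : 0 < (1-b₀)*(18 + 15*b₀ - b₀^2 - 2*b₀^3) := by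
      apply mul_pos (by linarith)
      nlinarith
    have hY : 0 < (b₀^2-3)^2 := by nlinarith
    have e2 : α^2 * (b₀*(b₀+1)*(b₀+3)) / ((b₀^2-3)^2) ≤ 2*α^2 := by
      rw [div_le_iff₀ hY]
      nlinarith [mul_pos (show (0:ℝ) < α^2 by linarith) hprod]
    show β ≤ (b₀+1)*(b₀+3)/b₀ - α^2 * (b₀*(b₀+1)*(b₀+3)) / ((b₀^2-3)^2)
    rw [e0]
    linarith
  have hmem : β ∈ Set.Icc (G ρ) (G b₀) := ⟨hGρ ▸ hβ.le, hGb₀⟩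
  obtain ⟨b, hb, hGb⟩ := intermediate_value_Icc' hb₀ρ.le hcont hmem
  have hbpos : 0 < b := lt_of_lt_of_le hb₀pos hb.1
  have hbρ : b < ρ := by
    rcases lt_or_eq_of_le hb.2 with h | h
    · exact h
    · exfalso; rw [h, hGρ] at hGb; linarith
  have hkey : |α| * b + b ^ 2 < 3 := by
    nlinarith [mul_pos (show (0:ℝ) < ρ - b by linarith)
      (show (0:ℝ) < ρ + b + |α| by linarith)]
  have hb1 : b < 1 := by nlinarith
  exact ⟨b, hbpos, hb1, hkey, hGb⟩

private lemma exists_factorization (α β : ℝ) (hα : 4 < α ^ 2) (hβ : 0 < β) :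
    ∃ a b c d : ℝ, 0 < b ∧ b < 1 ∧ 3 < d ∧ |a| < 1 + b ∧ |c| < 1 + d ∧
      a + c = α ∧ a * d + b * c = -α ∧ b + d + a * c = β - 4 ∧ b * d = 3 := by
  have hA : 2 < |α| := by
    have := abs_nonneg α
    nlinarith [sq_abs α]
  obtain ⟨b, hbpos, hb1, hkey, hGb⟩ := exists_b α β hα hβ
  have hb3 : b ^ 2 - 3 < 0 := by nlinarith
  have hbne : b ≠ 0 := ne_of_gt hbpos
  have hb3ne : b ^ 2 - 3 ≠ 0 := ne_of_lt hb3
  have hd3 : 3 < 3 / b := by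
    rw [lt_div_iff₀ hbpos]; nlinarith
  have h3b : (3:ℝ) - b ^ 2 ≠ 0 := fun h => hb3ne (by linarith)
  refine ⟨α * b * (b+1) / (b^2-3), b, α * b * (3/b+1) / (3-b^2), 3/b,
    hbpos, hb1, hd3, ?_, ?_, ?_, ?_, ?_, ?_⟩
  · rw [abs_div, abs_of_neg (by linarith : b^2 - 3 < 0), div_lt_iff₀ (by linarith)]
    have : |α * b * (b+1)| = |α| * b * (b+1) := by
      rw [abs_mul, abs_mul, abs_of_pos hbpos, abs_of_pos (by linarith : (0:ℝ) < b+1)]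
    rw [this]
    nlinarith [mul_pos (show (0:ℝ) < 1 + b by linarith)
      (show (0:ℝ) < 3 - b^2 - |α| * b by linarith)]
  · rw [abs_div, abs_of_pos (by linarith : (0:ℝ) < 3 - b^2), div_lt_iff₀ (by linarith)]
    have : abs (α * b * (3/b+1)) = |α| * b * (3/b+1) := by
      rw [abs_mul, abs_mul, abs_of_pos hbpos, abs_of_pos (by positivity : (0:ℝ) < 3/b+1)]
    rw [this]
    nlinarith [mul_pos (show (0:ℝ) < 1 + 3/b by linarith)
      (show (0:ℝ) < 3 - b^2 - |α| * b by linarith)]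
  · field_simp
    ring
  · field_simp
    ring
  · have hac : α * b * (b+1) / (b^2-3) * (α * b * (3/b+1) / (3-b^2))
        = β - (b+1)*(b+3)/b := by
      rw [← hGb]
      field_simp
      ring
    rw [hac]
    field_simp
    ring
  · field_simp

private lemma q_factor (α β a b c d : ℝ)
    (e1 : a + c = α) (e2 : a * d + b * c = -α) (e3 : b + d + a * c = β - 4)
    (e4 : b * d = 3) :
    q α β = (X ^ 2 + C (a:ℂ) * X + C (b:ℂ)) * (X ^ 2 + C (c:ℂ) * X + C (d:ℂ)) := by
  have f1 : (a:ℂ) + c = α := by exact_mod_cast congrArg (Complex.ofReal) e1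
  have f2 : (a:ℂ) * d + b * c = -α := by exact_mod_cast congrArg (Complex.ofReal) e2
  have f3 : (b:ℂ) + d + a * c = (β:ℂ) - 4 := by
    have := congrArg (Complex.ofReal) e3
    push_cast at this
    rw [show ((β:ℂ) - 4) = ((β - 4 : ℝ) : ℂ) by push_cast; ring]; exact_mod_cast e3
  have f4 : (b:ℂ) * d = 3 := by exact_mod_cast congrArg (Complex.ofReal) e4
  apply Polynomial.funext
  intro z
  simp only [q, eval_add, eval_sub, eval_mul, eval_pow, eval_X, eval_C]
  push_cast
  linear_combination -((z:ℂ)^3 * f1 + z * f2 + z^2 * f3 + f4)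

private lemma quad_monic (a b : ℝ) : (X ^ 2 + C (a:ℂ) * X + C (b:ℂ)).Monic := by
  monicity!

private lemma quad_natDegree (a b : ℝ) : (X ^ 2 + C (a:ℂ) * X + C (b:ℂ)).natDegree = 2 := by
  compute_degree!

private lemma quad_card_roots (a b : ℝ) :
    Multiset.card (X ^ 2 + C (a:ℂ) * X + C (b:ℂ)).roots = 2 := by
  have h := (Polynomial.splits_iff_card_roots (f := X ^ 2 + C (a:ℂ) * X + C (b:ℂ))).mp
    (IsAlgClosed.splits _)
  rw [h, quad_natDegree a b]

private lemma quad_root_eq (a b : ℝ) (z : ℂ)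
    (hz : z ∈ (X ^ 2 + C (a:ℂ) * X + C (b:ℂ)).roots) :
    z ^ 2 + (a:ℂ) * z + (b:ℂ) = 0 := by
  have := (Polynomial.mem_roots ((quad_monic a b).ne_zero)).1 hz
  simpa [Polynomial.IsRoot, eval_add, eval_mul, eval_pow, eval_X, eval_C] using this

/-- If `α² > 4` and `β > 0`, then `q_{α,β}` has exactly 2 roots (with multiplicity)
in the open unit disk. -/
theorem stmt_0 (α β : ℝ) (hα : 4 < α ^ 2) (hβ : 0 < β) :
    Multiset.card ((q α β).roots.filter (fun z => ‖z‖ < 1)) = 2 := by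
  obtain ⟨a, b, c, d, hb0, hb1, hd3, ha, hc, e1, e2, e3, e4⟩ :=
    exists_factorization α β hα hβ
  have hfac := q_factor α β a b c d e1 e2 e3 e4
  have hgne : (X ^ 2 + C (a:ℂ) * X + C (b:ℂ)) ≠ 0 := (quad_monic a b).ne_zero
  have hhne : (X ^ 2 + C (c:ℂ) * X + C (d:ℂ)) ≠ 0 := (quad_monic c d).ne_zero
  rw [hfac, Polynomial.roots_mul (mul_ne_zero hgne hhne), Multiset.filter_add,
    Multiset.card_add]
  have hg2 : ((X ^ 2 + C (a:ℂ) * X + C (b:ℂ)).roots.filter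
      (fun z => ‖z‖ < 1)) = (X ^ 2 + C (a:ℂ) * X + C (b:ℂ)).roots := by
    apply Multiset.filter_eq_self.2
    intro z hz
    exact quad_root_inside a b hb0 hb1 ha z (quad_root_eq a b z hz)
  have hh0 : ((X ^ 2 + C (c:ℂ) * X + C (d:ℂ)).roots.filter
      (fun z => ‖z‖ < 1)) = 0 := by
    apply Multiset.filter_eq_nil.2
    intro z hz
    exact quad_root_outside c d hd3 hc z (quad_root_eq c d z hz)
  rw [hg2, hh0, quad_card_roots]
  simp
end

section
/- Let α, β be real numbers with 4 < α² < 6, 0 < β < 2, and α > 0. Then q_{α,β} has a real root in the open interval (−2, −1). -/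
open Polynomial

/-- If `4 < α² < 6`, `0 < β < 2` and `α > 0`, then `q_{α,β}` has a real root
in the open interval `(−2, −1)`. -/
theorem stmt_2 (α β : ℝ) (hα₁ : 4 < α ^ 2) (hα₂ : α ^ 2 < 6)
    (hβ₁ : 0 < β) (hβ₂ : β < 2) (hα : 0 < α) :
    ∃ w : ℝ, w ∈ Set.Ioo (-2 : ℝ) (-1) ∧ (q α β).IsRoot (w : ℂ) := by
  have hα2 : 2 < α := by nlinarith
  set f : ℝ → ℝ := fun w => w ^ 4 + α * w ^ 3 + (β - 4) * w ^ 2 - α * w + 3 with hf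
  have hcont : ContinuousOn f (Set.Icc (-2 : ℝ) (-1)) := by
    fun_prop
  have hfa : f (-2) < 0 := by simp only [hf]; nlinarith
  have hfb : 0 < f (-1) := by simp only [hf]; nlinarith
  have h0 : (0 : ℝ) ∈ Set.Ioo (f (-2)) (f (-1)) := ⟨hfa, hfb⟩
  have := intermediate_value_Ioo (by norm_num : (-2 : ℝ) ≤ -1) hcont h0
  obtain ⟨w, hw, hfw⟩ := this
  refine ⟨w, hw, ?_⟩
  have : ((f w : ℝ) : ℂ) = 0 := by rw [hfw]; norm_num
  simp only [hf] at this
  push_cast at this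
  simp [q, IsRoot, eval_add, eval_sub, eval_mul, eval_pow]
  linear_combination this
end

section
/- Let α, β be real numbers with 4 < α² < 6, 0 < β < 2, and α < 0. Then q_{α,β} has a real root in the open interval (1, 2). -/
open Polynomial

/-- If `4 < α² < 6`, `0 < β < 2` and `α < 0`, then `q_{α,β}` has a real root
in the open interval `(1, 2)`. -/
theorem stmt_3 (α β : ℝ) (hα₁ : 4 < α ^ 2) (hα₂ : α ^ 2 < 6)
    (hβ₁ : 0 < β) (hβ₂ : β < 2) (hα : α < 0) :
    ∃ w : ℝ, w ∈ Set.Ioo (1 : ℝ) 2 ∧ (q α β).IsRoot (w : ℂ) := by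
  have hα2 : α < -2 := by nlinarith
  set f : ℝ → ℝ := fun w => w ^ 4 + α * w ^ 3 + (β - 4) * w ^ 2 - α * w + 3 with hf
  have hcont : ContinuousOn f (Set.Icc (1 : ℝ) 2) := by
    apply Continuous.continuousOn; fun_prop
  have h1 : f 1 = β := by simp [hf]; ring
  have h2 : f 2 < 0 := by simp only [hf]; nlinarith
  have key : (0 : ℝ) ∈ Set.Ioo (f 2) (f 1) := ⟨h2, by rw [h1]; exact hβ₁⟩
  have := intermediate_value_Ioo' (by norm_num : (1:ℝ) ≤ 2) hcont key
  obtain ⟨w, hw, hfw⟩ := this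
  refine ⟨w, hw, ?_⟩
  have hfz : f w = 0 := hfw
  have : ((w ^ 4 + α * w ^ 3 + (β - 4) * w ^ 2 - α * w + 3 : ℝ) : ℂ) = 0 := by
    rw [show (w ^ 4 + α * w ^ 3 + (β - 4) * w ^ 2 - α * w + 3 : ℝ) = f w from rfl, hfz]
    simp
  simp only [q, IsRoot, eval_add, eval_sub, eval_mul, eval_pow, eval_C, eval_X]
  push_cast at this ⊢
  linear_combination this
end

section
/- Let α, β be real numbers with 4 < α² < 6 and 4/100 < β < 165/100. Then q_{α,β} has precisely 1 simple root in U_1(0) ∩ {z ∈ ℂ : Im z < 0}, precisely 1 simple root in U_1(0) ∩ {z ∈ ℂ : Im z > 0}, and precisely 2 different simple real roots, both lying in ℝ \ [−1, 1]. In particular, q_{α,β} has no roots on the unit circle S¹ and no roots in the real interval [−1, 1]. -/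
set_option maxHeartbeats 1000000

open Polynomial

lemma eval_q (α β : ℝ) (x : ℂ) :
    (q α β).eval x = x^4 + (α:ℂ)*x^3 + ((β:ℂ)-4)*x^2 - (α:ℂ)*x + 3 := by
  simp [q]

lemma q_natDegree (α β : ℝ) : (q α β).natDegree = 4 := by
  unfold q; compute_degree!

lemma q_monic (α β : ℝ) : (q α β).Monic := by
  rw [Polynomial.Monic, Polynomial.leadingCoeff, q_natDegree]
  unfold q; compute_degree!

lemma q_ne_zero (α β : ℝ) : q α β ≠ 0 := (q_monic α β).ne_zero

lemma q_card_roots (α β : ℝ) : Multiset.card (q α β).roots = 4 := by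
  rw [← q_natDegree α β]
  exact (Polynomial.splits_iff_card_roots.mp (IsAlgClosed.splits _))

lemma q_prod3 (α β : ℝ) : (q α β).roots.prod = 3 := by
  have h := Polynomial.Splits.eq_prod_roots_of_monic
      (IsAlgClosed.splits _) (q_monic α β)
  have h0 : (q α β).eval 0 = 3 := by rw [eval_q]; ring
  rw [h, Polynomial.eval_multiset_prod, Multiset.map_map] at h0
  simp only [Function.comp, eval_sub, eval_X, eval_C, zero_sub] at h0
  rw [show ((q α β).roots.map (fun x => -x)).prod
      = (-1)^(Multiset.card (q α β).roots) * (q α β).roots.prod by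
    simp [Multiset.prod_map_neg], q_card_roots] at h0
  norm_num at h0; exact h0

lemma conj_root (α β : ℝ) {z : ℂ} (hz : (q α β).IsRoot z) :
    (q α β).IsRoot ((starRingEnd ℂ) z) := by
  rw [Polynomial.IsRoot, eval_q] at hz ⊢
  have := congrArg (starRingEnd ℂ) hz
  simpa [map_add, map_sub, map_mul, map_pow, map_ofNat, Complex.conj_ofReal] using this

lemma real_root_eq (α β : ℝ) {x : ℝ} (hx : (q α β).IsRoot (x : ℂ)) :
    x^4 + α*x^3 + (β-4)*x^2 - α*x + 3 = 0 := by
  rw [Polynomial.IsRoot, eval_q] at hx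
  exact_mod_cast hx

lemma mem_roots_q (α β : ℝ) {z : ℂ} : z ∈ (q α β).roots ↔ (q α β).IsRoot z := by
  rw [Polynomial.mem_roots (q_ne_zero α β)]

lemma alpha_lt (α : ℝ) (h2 : 2 < α) (h6 : α^2 < 6) : α < 49/20 := by nlinarith

lemma fpos (α β : ℝ) (hα : 2 < α) (hα₂ : α ^ 2 < 6)
    (hβ₁ : 1/25 < β) (hβ₂ : β < 33/20) :
    ∀ x : ℝ, -1 ≤ x → 0 < x^4 + α*x^3 + (β-4)*x^2 - α*x + 3 := by
  intro x hx
  have ha' : α < 49/20 := alpha_lt α hα hα₂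
  rcases le_or_gt x 0 with h0 | h0
  · -- -1 ≤ x ≤ 0
    have h1 : x*(x^2-1) ≥ 0 := by nlinarith
    have h2 : α * (x*(x^2-1)) ≥ 0 := mul_nonneg (by linarith) h1
    nlinarith [sq_nonneg x, mul_nonneg (mul_nonneg (sub_nonneg.2 hx) (sub_nonneg.2 hx)) (sq_nonneg (x-1))]
  · rcases le_or_gt x 1 with h1 | h1
    · -- 0 < x ≤ 1
      have hneg : x*(x^2-1) ≤ 0 := by nlinarith
      have key : α * (x*(x^2-1)) ≥ (49/20) * (x*(x^2-1)) := by nlinarith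
      have hb : β * x^2 ≥ (1/25) * x^2 := by nlinarith [sq_nonneg x]
      nlinarith [sq_nonneg (x^2 + (49/40)*x - 29/20), mul_nonneg h0.le (sub_nonneg.2 h1),
        mul_nonneg (mul_nonneg h0.le h0.le) (sub_nonneg.2 h1),
        mul_nonneg (mul_nonneg (mul_nonneg h0.le h0.le) h0.le) (sub_nonneg.2 h1),
        sq_nonneg (x - 93/100), mul_nonneg (mul_nonneg h0.le (sub_nonneg.2 h1)) (sq_nonneg (x-93/100))]
    · -- 1 < x
      have h2 : x^2 + α*x - 3 > 0 := by nlinarith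
      nlinarith [mul_nonneg (by nlinarith : (0:ℝ) ≤ x^2-1) h2.le, mul_pos (by linarith : (0:ℝ) < β) (by nlinarith : (0:ℝ) < x^2)]

lemma exists_real_roots (α β : ℝ) (hα : 2 < α) (hα₂ : α ^ 2 < 6)
    (hβ₁ : 1/25 < β) (hβ₂ : β < 33/20) :
    ∃ r₁ r₂ : ℝ, (r₁^4 + α*r₁^3 + (β-4)*r₁^2 - α*r₁ + 3 = 0) ∧
      (r₂^4 + α*r₂^3 + (β-4)*r₂^2 - α*r₂ + 3 = 0) ∧
      r₁ < -30/17 ∧ -17/10 < r₂ ∧ r₂ < -1 ∧ 3 < r₁ * r₂ := by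
  have ha' : α < 49/20 := by nlinarith
  set F : ℝ → ℝ := fun x => x^4 + α*x^3 + (β-4)*x^2 - α*x + 3 with hF
  have hc : Continuous F := by fun_prop
  -- root r₂ in (-17/10, -1)
  have hFa : F (-17/10) < 0 := by simp only [hF]; norm_num; nlinarith
  have hFb : (0:ℝ) < F (-1) := by simp only [hF]; norm_num; nlinarith
  have hsub := intermediate_value_Icc (by norm_num : (-17/10:ℝ) ≤ -1) hc.continuousOn
  obtain ⟨r, hrmem, hr0⟩ := hsub ⟨hFa.le, hFb.le⟩
  obtain ⟨hrl, hrr⟩ := hrmem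
  have hrl' : -17/10 < r := lt_of_le_of_ne hrl (by rintro rfl; linarith [hr0 ▸ hFa])
  have hrr' : r < -1 := lt_of_le_of_ne hrr (by rintro rfl; linarith [hr0 ▸ hFb])
  -- key inequalities
  have hA : 0 < r^4 + 2*r^3 + (β-4)*r^2 - 2*r + 3 := by
    have : r^4 + 2*r^3 + (β-4)*r^2 - 2*r + 3 = F r - (α-2)*(r*(r^2-1)) := by
      simp only [hF]; ring
    rw [this, hr0]
    have h1 : r*(r^2-1) < 0 := by nlinarith
    nlinarith
  have hD : 0 < r^4 + (2*β-10)*r^2 + 9 := by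
    have hid2 : r^4 + (2*β-10)*r^2 + 9
        = 2*(r^4 + 2*r^3 + (β-4)*r^2 - 2*r + 3) + (r+1)^2*((3+r)*(1-r)) := by ring
    have hpos : 0 ≤ (r+1)^2*((3+r)*(1-r)) :=
      mul_nonneg (sq_nonneg _) (le_of_lt (mul_pos (by linarith) (by linarith)))
    linarith
  have hH : r^4 + 2*(β-4)*r^2 + 4*α*r + 15 < 0 := by
    have hid : (r^2-1) * (r^4 + 2*(β-4)*r^2 + 4*α*r + 15)
        = -(3-r^2) * (r^4 + (2*β-10)*r^2 + 9) + 4 * (F r) := by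
      simp only [hF]; ring
    rw [hr0, mul_zero, add_zero] at hid
    have h1 : 0 < r^2 - 1 := by nlinarith
    have h2 : 0 < 3 - r^2 := by nlinarith
    nlinarith
  have hrne : r ≠ 0 := by intro h; rw [h] at hrr'; norm_num at hrr'
  have hF3r : F (3/r) < 0 := by
    have ht : (3/r) * r = 3 := div_mul_cancel₀ 3 hrne
    have key : r^4 * (F (3/r)) = 6*(r^4 + 2*(β-4)*r^2 + 4*α*r + 15) - 3*(F r) := by
      simp only [hF]
      linear_combination (r^3*(3/r)^3 + (3*r^2 + α*r^3)*(3/r)^2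
        + (9*r + 3*α*r^2 + (β-4)*r^3)*(3/r) + (27 + 9*α*r + 3*(β-4)*r^2 - α*r^3)) * ht
    rw [hr0, mul_zero, sub_zero] at key
    have h4 : 0 < r^4 := by positivity
    by_contra hcon
    push_neg at hcon
    nlinarith
  -- root r₁ in (-4, 3/r)
  have hF4 : 0 < F (-4) := by simp only [hF]; norm_num; nlinarith
  have h3rlt : 3/r < -30/17 := by
    rw [div_lt_iff_of_neg (by linarith : r < 0)]; linarith
  have h3rgt : (-4:ℝ) < 3/r := by
    rw [lt_div_iff_of_neg (by linarith : r < 0)]; linarith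
  have hsub2 := intermediate_value_Icc' (le_of_lt h3rgt) hc.continuousOn
  obtain ⟨r₁, hr1mem, hr10⟩ := hsub2 ⟨hF3r.le, hF4.le⟩
  obtain ⟨h1l, h1r⟩ := hr1mem
  have h1r' : r₁ < 3/r := lt_of_le_of_ne h1r (by rintro rfl; linarith [hr10 ▸ hF3r])
  refine ⟨r₁, r, hr10, hr0, by linarith, hrl', hrr', ?_⟩
  have := (lt_div_iff_of_neg (by linarith : r < 0)).mp h1r'
  linarith

lemma good_pos (α β : ℝ) (hα : 2 < α) (hα₂ : α ^ 2 < 6)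
    (hβ₁ : 1/25 < β) (hβ₂ : β < 33/20) :
    ∃ (r₁ r₂ : ℝ) (z : ℂ), (q α β).roots = {(r₁:ℂ), (r₂:ℂ), z, (starRingEnd ℂ) z}
      ∧ 1 < |r₁| ∧ 1 < |r₂| ∧ r₁ ≠ r₂ ∧ 0 < z.im ∧ Complex.normSq z < 1 := by
  obtain ⟨r₁, r₂, h1, h2, hr1lt, hr2gt, hr2lt, hprod⟩ :=
    exists_real_roots α β hα hα₂ hβ₁ hβ₂
  have hfpos := fpos α β hα hα₂ hβ₁ hβ₂
  have habs1 : 1 < |r₁| := by rw [lt_abs]; right; linarith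
  have habs2 : 1 < |r₂| := by rw [lt_abs]; right; linarith
  have hne : r₁ ≠ r₂ := by intro h; rw [h] at hr1lt; linarith
  have hm1 : (r₁:ℂ) ∈ (q α β).roots := by
    rw [mem_roots_q, Polynomial.IsRoot, eval_q]; exact_mod_cast h1
  have hm2 : (r₂:ℂ) ∈ (q α β).roots := by
    rw [mem_roots_q, Polynomial.IsRoot, eval_q]; exact_mod_cast h2
  have hne12 : (r₂:ℂ) ≠ (r₁:ℂ) := by exact_mod_cast hne.symm
  have hm2' : (r₂:ℂ) ∈ (q α β).roots.erase (r₁:ℂ) :=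
    (Multiset.mem_erase_of_ne hne12).mpr hm2
  obtain ⟨z, w, hzw⟩ := Multiset.card_eq_two.mp (show Multiset.card
      (((q α β).roots.erase (r₁:ℂ)).erase (r₂:ℂ)) = 2 by
    rw [Multiset.card_erase_of_mem hm2', Multiset.card_erase_of_mem hm1, q_card_roots]; rfl)
  have hR : (q α β).roots = (r₁:ℂ) ::ₘ (r₂:ℂ) ::ₘ {z, w} := by
    rw [← hzw, Multiset.cons_erase hm2', Multiset.cons_erase hm1]
  have hzr : (q α β).IsRoot z := by
    rw [← mem_roots_q, hR]; simp
  have hwr : (q α β).IsRoot w := by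
    rw [← mem_roots_q, hR]; simp
  have prodeq : (r₁:ℂ) * ((r₂:ℂ) * (z * w)) = 3 := by
    have h := q_prod3 α β; rw [hR] at h
    simpa [Multiset.prod_cons] using h
  have keyim : ∀ u v : ℂ, (q α β).IsRoot u → (q α β).IsRoot v →
      (r₁:ℂ) * ((r₂:ℂ) * (u * v)) = 3 → u.im ≠ 0 := by
    intro u v hu hv hp h0
    have hu' : u = ((u.re : ℝ) : ℂ) := by
      apply Complex.ext <;> simp [h0]
    set x := u.re with hx
    rw [hu'] at hu hp
    have hx0 := real_root_eq α β hu
    have hxlt : x < -1 := by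
      by_contra hcon; push_neg at hcon
      have := hfpos x (by linarith); linarith
    have hdne : r₁*r₂*x ≠ 0 := by nlinarith
    have hdneC : ((r₁*r₂*x : ℝ) : ℂ) ≠ 0 := by exact_mod_cast hdne
    have hveq0 : v * ((r₁*r₂*x : ℝ):ℂ) = 3 := by push_cast; linear_combination hp
    have hveq : v = ((3/(r₁*r₂*x) : ℝ) : ℂ) := by
      rw [eq_div_of_mul_eq hdneC hveq0]; push_cast; ring
    set y := 3/(r₁*r₂*x) with hy
    rw [hveq] at hv
    have hy0 := real_root_eq α β hv
    have hylt : y < -1 := by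
      by_contra hcon; push_neg at hcon
      have := hfpos y (by linarith); linarith
    have hxy : y * (r₁*r₂*x) = 3 := by rw [hy]; exact div_mul_cancel₀ 3 hdne
    nlinarith [mul_pos (show (0:ℝ) < -x-1 by linarith) (show (0:ℝ) < -y-1 by linarith)]
  have hzim : z.im ≠ 0 := keyim z w hzr hwr prodeq
  have hwim : w.im ≠ 0 := keyim w z hwr hzr (by linear_combination prodeq)
  have hcz : (starRingEnd ℂ) z ∈ (q α β).roots := (mem_roots_q α β).mpr (conj_root α β hzr)
  rw [hR] at hcz
  have hczw : (starRingEnd ℂ) z = w := by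
    have e1 : (starRingEnd ℂ) z ≠ (r₁:ℂ) := by
      intro h; apply hzim
      have := congrArg Complex.im h; simpa using this
    have e2 : (starRingEnd ℂ) z ≠ (r₂:ℂ) := by
      intro h; apply hzim
      have := congrArg Complex.im h; simpa using this
    have e3 : (starRingEnd ℂ) z ≠ z := fun h => hzim (Complex.conj_eq_iff_im.mp h)
    simp only [Multiset.insert_eq_cons, Multiset.mem_cons, Multiset.mem_singleton] at hcz
    tauto
  have hnormsq : Complex.normSq z < 1 := by
    have hzw' : z * w = ((Complex.normSq z : ℝ) : ℂ) := by
      rw [← hczw, Complex.mul_conj]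
    rw [hzw'] at prodeq
    have : r₁ * (r₂ * Complex.normSq z) = 3 := by exact_mod_cast prodeq
    nlinarith [Complex.normSq_nonneg z]
  rcases lt_or_gt_of_ne hzim with hneg | hpos
  · refine ⟨r₁, r₂, w, ?_, habs1, habs2, hne, ?_, ?_⟩
    · rw [hR, ← hczw, Complex.conj_conj]
      rw [show ({z, (starRingEnd ℂ) z} : Multiset ℂ) = {(starRingEnd ℂ) z, z} from
        Multiset.cons_swap _ _ _]
      rfl
    · rw [← hczw]; simpa using hneg
    · rw [← hczw]; rwa [Complex.normSq_conj]
  · exact ⟨r₁, r₂, z, by rw [hR, hczw]; rfl, habs1, habs2, hne, hpos, hnormsq⟩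

lemma good (α β : ℝ) (hα₁ : 4 < α ^ 2) (hα₂ : α ^ 2 < 6)
    (hβ₁ : 1/25 < β) (hβ₂ : β < 33/20) :
    ∃ (r₁ r₂ : ℝ) (z : ℂ), (q α β).roots = {(r₁:ℂ), (r₂:ℂ), z, (starRingEnd ℂ) z}
      ∧ 1 < |r₁| ∧ 1 < |r₂| ∧ r₁ ≠ r₂ ∧ 0 < z.im ∧ Complex.normSq z < 1 := by
  rcases le_or_gt α 0 with hs | hs
  · have hα' : 2 < -α := by nlinarith
    obtain ⟨r₁, r₂, z, hroots, habs1, habs2, hne, hzim, hnsq⟩ :=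
      good_pos (-α) β hα' (by nlinarith) hβ₁ hβ₂
    have neg_root : ∀ w : ℂ, (q (-α) β).IsRoot w → (q α β).IsRoot (-w) := by
      intro w hw
      rw [Polynomial.IsRoot, eval_q] at hw ⊢
      push_cast at hw ⊢
      linear_combination hw
    have hmem : ∀ w : ℂ, w ∈ (q (-α) β).roots → (-w) ∈ (q α β).roots := fun w hw =>
      (mem_roots_q α β).mpr (neg_root w ((mem_roots_q (-α) β).mp hw))
    have hm1 : ((-r₁ : ℝ) : ℂ) ∈ (q α β).roots := by
      push_cast; exact hmem _ (by rw [hroots]; simp)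
    have hm2 : ((-r₂ : ℝ) : ℂ) ∈ (q α β).roots := by
      push_cast; exact hmem _ (by rw [hroots]; simp)
    have hm3 : (-((starRingEnd ℂ) z)) ∈ (q α β).roots := by
      apply hmem; rw [hroots]; simp
    have hm4 : (-z) ∈ (q α β).roots := by
      apply hmem; rw [hroots]; simp
    set z' : ℂ := -((starRingEnd ℂ) z) with hz'
    have hconjz' : (starRingEnd ℂ) z' = -z := by rw [hz', map_neg, Complex.conj_conj]
    have him' : z'.im = z.im := by simp [hz']
    have d12 : ((-r₁ : ℝ) : ℂ) ≠ ((-r₂ : ℝ) : ℂ) := by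
      exact_mod_cast fun h => hne (neg_injective h)
    have d13 : ((-r₁ : ℝ) : ℂ) ≠ z' := by
      intro h; have h' := congrArg Complex.im h
      rw [Complex.ofReal_im, him'] at h'; linarith
    have d14 : ((-r₁ : ℝ) : ℂ) ≠ (starRingEnd ℂ) z' := by
      intro h; have h' := congrArg Complex.im h
      rw [Complex.ofReal_im, hconjz', Complex.neg_im] at h'; linarith
    have d23 : ((-r₂ : ℝ) : ℂ) ≠ z' := by
      intro h; have h' := congrArg Complex.im h
      rw [Complex.ofReal_im, him'] at h'; linarith
    have d24 : ((-r₂ : ℝ) : ℂ) ≠ (starRingEnd ℂ) z' := by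
      intro h; have h' := congrArg Complex.im h
      rw [Complex.ofReal_im, hconjz', Complex.neg_im] at h'; linarith
    have d34 : z' ≠ (starRingEnd ℂ) z' := by
      intro h; have h' := congrArg Complex.im h
      rw [him', hconjz', Complex.neg_im] at h'; linarith
    set S : Multiset ℂ := {((-r₁ : ℝ) : ℂ), ((-r₂ : ℝ) : ℂ), z', (starRingEnd ℂ) z'} with hS
    have hSnodup : S.Nodup := by
      simp only [hS, Multiset.insert_eq_cons, Multiset.nodup_cons, Multiset.mem_cons,
        Multiset.mem_singleton, Multiset.nodup_singleton, and_true]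
      push_neg
      exact ⟨⟨d12, d13, d14⟩, ⟨d23, d24⟩, d34⟩
    have hle : S ≤ (q α β).roots := by
      rw [Multiset.le_iff_subset hSnodup]
      intro a ha
      simp only [hS, Multiset.insert_eq_cons, Multiset.mem_cons, Multiset.mem_singleton] at ha
      rcases ha with rfl | rfl | rfl | rfl
      · exact hm1
      · exact hm2
      · exact hm3
      · rw [hconjz']; exact hm4
    have heq : (q α β).roots = S :=
      (Multiset.eq_of_le_of_card_le hle (by rw [q_card_roots]; simp [hS])).symm
    refine ⟨-r₁, -r₂, z', heq, by rwa [abs_neg], by rwa [abs_neg],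
      fun h => hne (neg_injective h), by rw [him']; exact hzim, ?_⟩
    rw [hz', Complex.normSq_neg, Complex.normSq_conj]
    exact hnsq
  · exact good_pos α β (by nlinarith) hα₂ hβ₁ hβ₂

/-- If `4 < α² < 6` and `4/100 < β < 165/100`, then `q_{α,β}` has precisely 1 simple
root in the open lower half-disk, precisely 1 simple root in the open upper half-disk,
and precisely 2 different simple real roots, both in `ℝ \ [−1,1]`. In particular it has
no roots on the unit circle and none in the real interval `[−1,1]`. -/
theorem stmt_4 (α β : ℝ) (hα₁ : 4 < α ^ 2) (hα₂ : α ^ 2 < 6)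
    (hβ₁ : 4 / 100 < β) (hβ₂ : β < 165 / 100) :
    Multiset.card ((q α β).roots.filter (fun z => ‖z‖ < 1 ∧ z.im < 0)) = 1 ∧
    Multiset.card ((q α β).roots.filter (fun z => ‖z‖ < 1 ∧ 0 < z.im)) = 1 ∧
    Multiset.card ((q α β).roots.filter (fun z => z.im = 0)) = 2 ∧
    ((q α β).roots.filter (fun z => z.im = 0)).Nodup ∧
    (∀ z ∈ (q α β).roots, z.im = 0 → 1 < |z.re|) ∧
    (∀ z ∈ (q α β).roots, ‖z‖ ≠ 1) ∧
    (∀ x : ℝ, x ∈ Set.Icc (-1 : ℝ) 1 → ¬ (q α β).IsRoot (x : ℂ)) := by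
  obtain ⟨r₁, r₂, z, hroots, habs1, habs2, hne, hzim, hnsq⟩ :=
    good α β hα₁ hα₂ (by linarith) (by linarith)
  have habsz : ‖z‖ < 1 := by
    have h := Complex.sq_norm z
    nlinarith [norm_nonneg z]
  have habscz : ‖(starRingEnd ℂ) z‖ < 1 := by rwa [Complex.norm_conj]
  have hcim : ((starRingEnd ℂ) z).im = -z.im := Complex.conj_im z
  have habsr1 : ‖((r₁:ℝ):ℂ)‖ = |r₁| := by rw [Complex.norm_real, Real.norm_eq_abs]
  have habsr2 : ‖((r₂:ℝ):ℂ)‖ = |r₂| := by rw [Complex.norm_real, Real.norm_eq_abs]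
  refine ⟨?_, ?_, ?_, ?_, ?_, ?_, ?_⟩
  · rw [hroots]
    simp only [Multiset.insert_eq_cons]
    rw [Multiset.filter_cons_of_neg _ (by rw [habsr1]; rintro ⟨h, _⟩; linarith)]
    rw [Multiset.filter_cons_of_neg _ (by rw [habsr2]; rintro ⟨h, _⟩; linarith)]
    rw [Multiset.filter_cons_of_neg _ (by rintro ⟨_, h⟩; linarith)]
    rw [Multiset.filter_singleton, if_pos ⟨habscz, by rw [hcim]; linarith⟩]
    rfl
  · rw [hroots]
    simp only [Multiset.insert_eq_cons]
    rw [Multiset.filter_cons_of_neg _ (by rw [habsr1]; rintro ⟨h, _⟩; linarith)]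
    rw [Multiset.filter_cons_of_neg _ (by rw [habsr2]; rintro ⟨h, _⟩; linarith)]
    rw [Multiset.filter_cons_of_pos _ ⟨habsz, hzim⟩]
    rw [Multiset.filter_singleton, if_neg (by rintro ⟨_, h⟩; rw [hcim] at h; linarith)]
    rfl
  · rw [hroots]
    simp only [Multiset.insert_eq_cons]
    rw [Multiset.filter_cons, Multiset.filter_cons, Multiset.filter_cons,
      Multiset.filter_singleton]
    split_ifs with h1 h2 h3 h4 <;>
      simp_all <;> linarith
  · rw [hroots]
    simp only [Multiset.insert_eq_cons]
    rw [Multiset.filter_cons, Multiset.filter_cons, Multiset.filter_cons,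
      Multiset.filter_singleton]
    have hz3 : ¬ (z.im = 0) := by intro h; linarith
    have hz4 : ¬ (((starRingEnd ℂ) z).im = 0) := by rw [hcim]; intro h; linarith
    rw [if_neg hz3, if_neg hz4, if_pos (Complex.ofReal_im r₁), if_pos (Complex.ofReal_im r₂)]
    have hne' : ((r₁:ℝ):ℂ) ≠ ((r₂:ℝ):ℂ) := by exact_mod_cast hne
    simp [Multiset.nodup_cons, hne']
  · intro a ha him
    rw [hroots] at ha
    simp only [Multiset.insert_eq_cons, Multiset.mem_cons, Multiset.mem_singleton] at ha
    rcases ha with rfl | rfl | rfl | rfl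
    · rwa [Complex.ofReal_re]
    · rwa [Complex.ofReal_re]
    · linarith
    · rw [hcim] at him; linarith
  · intro a ha
    rw [hroots] at ha
    simp only [Multiset.insert_eq_cons, Multiset.mem_cons, Multiset.mem_singleton] at ha
    rcases ha with rfl | rfl | rfl | rfl
    · rw [habsr1]; intro h; linarith
    · rw [habsr2]; intro h; linarith
    · intro h; linarith
    · intro h; linarith [habscz]
  · rintro x ⟨hx1, hx2⟩ hroot
    have hmem : ((x:ℝ):ℂ) ∈ (q α β).roots := (mem_roots_q α β).mpr hroot
    rw [hroots] at hmem
    simp only [Multiset.insert_eq_cons, Multiset.mem_cons, Multiset.mem_singleton] at hmem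
    have hxabs : |x| ≤ 1 := abs_le.mpr ⟨hx1, hx2⟩
    rcases hmem with h | h | h | h
    · have : x = r₁ := by exact_mod_cast h
      rw [this] at hxabs; linarith
    · have : x = r₂ := by exact_mod_cast h
      rw [this] at hxabs; linarith
    · have := congrArg Complex.im h
      rw [Complex.ofReal_im] at this; linarith
    · have := congrArg Complex.im h
      rw [Complex.ofReal_im, hcim] at this; linarith
end

section
/- Let m, k be natural numbers with m ≥ 1 and m ≥ 2k + 1 + √(6k² + 6k + 1), set l := m + k, and let x ∈ (0, 1) with ε := 2√(1 − x²). Then l(l+1)/6 < m²x²/(2 + ε)² if and only if x² > 24 m² l(l+1) / (3m² + 2l(l+1))². -/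
/-- For natural numbers `m ≥ 1`, `k` with `m ≥ 2k+1+√(6k²+6k+1)`, `l := m + k`,
`x ∈ (0,1)` and `ε := 2√(1−x²)`:
`l(l+1)/6 < m²x²/(2+ε)²  ↔  x² > 24m²l(l+1)/(3m²+2l(l+1))²`. -/
theorem stmt_18 (m k : ℕ) (hm₁ : 1 ≤ m)
    (hm₂ : 2 * (k : ℝ) + 1 + Real.sqrt (6 * (k : ℝ) ^ 2 + 6 * k + 1) ≤ (m : ℝ))
    (l : ℕ) (hl : l = m + k) (x : ℝ) (hx : x ∈ Set.Ioo (0 : ℝ) 1) :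
    (l : ℝ) * (l + 1) / 6 < (m : ℝ) ^ 2 * x ^ 2 / (2 + 2 * Real.sqrt (1 - x ^ 2)) ^ 2 ↔
      24 * (m : ℝ) ^ 2 * ((l : ℝ) * (l + 1)) / (3 * (m : ℝ) ^ 2 + 2 * ((l : ℝ) * (l + 1))) ^ 2
        < x ^ 2 := by
  obtain ⟨hx0, hx1⟩ := hx
  set s := Real.sqrt (1 - x ^ 2) with hs
  have hx2 : 0 < 1 - x ^ 2 := by nlinarith
  have hs0 : 0 < s := Real.sqrt_pos.mpr hx2
  have hs2 : s ^ 2 = 1 - x ^ 2 := Real.sq_sqrt hx2.le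
  set L : ℝ := (l : ℝ) * (l + 1) with hLdef
  have hlm : (l : ℝ) = (m : ℝ) + k := by rw [hl]; push_cast; ring
  have hm1 : (1 : ℝ) ≤ (m : ℝ) := by exact_mod_cast hm₁
  have hk0 : (0 : ℝ) ≤ (k : ℝ) := Nat.cast_nonneg k
  have hL0 : 0 < L := by rw [hLdef, hlm]; nlinarith
  -- the key inequality 3m² ≥ 2L from hm₂
  have hr0 : 0 ≤ Real.sqrt (6 * (k : ℝ) ^ 2 + 6 * k + 1) := Real.sqrt_nonneg _
  have hr2 : (Real.sqrt (6 * (k : ℝ) ^ 2 + 6 * k + 1)) ^ 2 = 6 * (k : ℝ) ^ 2 + 6 * k + 1 :=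
    Real.sq_sqrt (by positivity)
  have hB : 2 * L ≤ 3 * (m : ℝ) ^ 2 := by
    have h1 : 2 * (k : ℝ) + 1 + Real.sqrt (6 * (k : ℝ) ^ 2 + 6 * k + 1) ≤ (m : ℝ) := hm₂
    have h2 : ((m : ℝ) - (2 * k + 1)) ^ 2 ≥ 6 * (k : ℝ) ^ 2 + 6 * k + 1 := by
      have : Real.sqrt (6 * (k : ℝ) ^ 2 + 6 * k + 1) ≤ (m : ℝ) - (2 * k + 1) := by linarith
      nlinarith
    rw [hLdef, hlm]; nlinarith
  set A : ℝ := 3 * (m : ℝ) ^ 2 + 2 * L with hA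
  have hA0 : 0 < A := by positivity
  have hD0 : (0 : ℝ) < (2 + 2 * s) ^ 2 := by positivity
  rw [div_lt_div_iff₀ (by norm_num) hD0, div_lt_iff₀ (by positivity)]
  have key1 : L * (2 + 2 * s) ^ 2 < (m : ℝ) ^ 2 * x ^ 2 * 6 ↔ s * A < 3 * (m : ℝ) ^ 2 - 2 * L := by
    constructor <;> intro h
    · by_contra hcon
      push_neg at hcon
      have h1 : 0 ≤ (1 + s) * (s * A - (3 * (m : ℝ) ^ 2 - 2 * L)) :=
        mul_nonneg (by linarith) (by linarith)
      nlinarith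
    · have h1 : 0 < (1 + s) * ((3 * (m : ℝ) ^ 2 - 2 * L) - s * A) :=
        mul_pos (by linarith) (by linarith)
      nlinarith
  have key2 : 24 * (m : ℝ) ^ 2 * L < x ^ 2 * A ^ 2 ↔ s * A < 3 * (m : ℝ) ^ 2 - 2 * L := by
    have hx2' : x ^ 2 = 1 - s ^ 2 := by linarith
    have hid : x ^ 2 * A ^ 2 - 24 * (m : ℝ) ^ 2 * L
        = (3 * (m : ℝ) ^ 2 - 2 * L) ^ 2 - (s * A) ^ 2 := by
      rw [hx2', hA]; ring
    have hBnn : (0 : ℝ) ≤ 3 * (m : ℝ) ^ 2 - 2 * L := by linarith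
    constructor <;> intro h
    · have h2 : (s * A) ^ 2 < (3 * (m : ℝ) ^ 2 - 2 * L) ^ 2 := by linarith
      exact lt_of_pow_lt_pow_left₀ 2 hBnn h2
    · have h2 : (s * A) ^ 2 < (3 * (m : ℝ) ^ 2 - 2 * L) ^ 2 := pow_lt_pow_left₀ h (mul_nonneg hs0.le hA0.le) two_ne_zero
      linarith
  rw [key1, key2]
end
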